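/- Let Γ = (V, E) be a finite complete multipartite graph, i.e., V admits a partition into nonempty subsets V₁, …, V_r such that two vertices are adjacent if and only if they lie in different parts. Then the right-angled Artin group G_Γ is isomorphic to the direct product of free groups FreeGroup(V₁) × ⋯ × FreeGroup(V_r). -/

import Mathlib

/-- The commutator relators of the right-angled Artin group of a graph `Γ`. -/
def raagRels {V : Type} (Γ : SimpleGraph V) : Set (FreeGroup V) :=
  {r | ∃ v w : V, Γ.Adj v w ∧
    r = FreeGroup.of v * FreeGroup.of w * (FreeGroup.of v)⁻¹ * (FreeGroup.of w)⁻¹}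

/-- The right-angled Artin group of a finite simple graph `Γ`. -/
abbrev RAAG {V : Type} (Γ : SimpleGraph V) : Type := PresentedGroup (raagRels Γ)

/-- Adjacent generators commute in the RAAG. -/
lemma raag_commute_of_adj {V : Type} {Γ : SimpleGraph V} {v w : V} (h : Γ.Adj v w) :
    Commute (PresentedGroup.of (rels := raagRels Γ) v)
      (PresentedGroup.of (rels := raagRels Γ) w) := by
  have hr : (FreeGroup.of v * FreeGroup.of w * (FreeGroup.of v)⁻¹ * (FreeGroup.of w)⁻¹ :
      FreeGroup V) ∈ Subgroup.normalClosure (raagRels Γ) :=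
    Subgroup.subset_normalClosure ⟨v, w, h, rfl⟩
  have h1 : ((QuotientGroup.mk (FreeGroup.of v * FreeGroup.of w * (FreeGroup.of v)⁻¹ *
      (FreeGroup.of w)⁻¹) : PresentedGroup (raagRels Γ)) = 1) :=
    (QuotientGroup.eq_one_iff _).mpr hr
  refine commutatorElement_eq_one_iff_commute.mp ?_
  rw [commutatorElement_def]
  exact h1

/-- If `Γ` is a finite complete multipartite graph, with parts the fibers of
a surjection `c : V → Fin r` and two vertices adjacent iff they lie in different parts, then
the right-angled Artin group `G_Γ` is isomorphic to the direct product of the free groups on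
the parts: `G_Γ ≅ FreeGroup(V₁) × ⋯ × FreeGroup(V_r)`. -/
theorem stmt_11 {V : Type} [Fintype V] (Γ : SimpleGraph V) (r : ℕ)
    (c : V → Fin r) (hc : Function.Surjective c)
    (hadj : ∀ u v : V, Γ.Adj u v ↔ c u ≠ c v) :
    Nonempty (RAAG Γ ≃* ((i : Fin r) → FreeGroup {v : V // c v = i})) := by
  classical
  -- the forward map
  set f : V → ((i : Fin r) → FreeGroup {v : V // c v = i}) :=
    fun v => Pi.mulSingle (c v) (FreeGroup.of ⟨v, rfl⟩) with hf
  have hrel : ∀ ρ ∈ raagRels Γ, FreeGroup.lift f ρ = 1 := by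
    rintro ρ ⟨v, w, hvw, rfl⟩
    have hne : c v ≠ c w := (hadj v w).mp hvw
    have hcomm := Pi.mulSingle_commute (f := fun i => FreeGroup {u : V // c u = i}) hne
      (FreeGroup.of (⟨v, rfl⟩ : {u : V // c u = c v}))
      (FreeGroup.of (⟨w, rfl⟩ : {u : V // c u = c w}))
    simp only [map_mul, map_inv, FreeGroup.lift_apply_of, hf]
    rw [hcomm.eq]
    group
  set Φ : RAAG Γ →* ((i : Fin r) → FreeGroup {v : V // c v = i}) :=
    PresentedGroup.toGroup hrel with hΦ
  -- the backward maps
  set φ : (i : Fin r) → FreeGroup {v : V // c v = i} →* RAAG Γ :=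
    fun i => FreeGroup.lift (fun x => PresentedGroup.of x.1) with hφ
  have hgen : ∀ (i j : Fin r), i ≠ j → ∀ (x : {v : V // c v = i}) (y : {v : V // c v = j}),
      Commute (PresentedGroup.of (rels := raagRels Γ) x.1) (PresentedGroup.of y.1) := by
    intro i j hij x y
    refine raag_commute_of_adj ((hadj x.1 y.1).mpr ?_)
    rw [x.2, y.2]; exact hij
  have hcomm : Pairwise fun i j => ∀ x y, Commute (φ i x) (φ j y) := by
    intro i j hij x y
    induction x using FreeGroup.induction_on with
    | C1 => simp [Commute.one_left]
    | of v =>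
      induction y using FreeGroup.induction_on with
      | C1 => simp [Commute.one_right]
      | of w => simpa [hφ] using hgen i j hij v w
      | inv_of w ih => simpa [hφ] using ih.inv_right
      | mul a b iha ihb => simpa [hφ] using iha.mul_right ihb
    | inv_of v ih => simpa [hφ] using ih.inv_left
    | mul a b iha ihb => simpa [hφ] using iha.mul_left ihb
  set Ψ : ((i : Fin r) → FreeGroup {v : V // c v = i}) →* RAAG Γ :=
    MonoidHom.noncommPiCoprod φ hcomm with hΨ
  have h1 : Ψ.comp Φ = MonoidHom.id _ := by
    refine PresentedGroup.ext fun v => ?_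
    simp only [MonoidHom.comp_apply, MonoidHom.id_apply, hΦ, PresentedGroup.toGroup.of, hf, hΨ]
    rw [MonoidHom.noncommPiCoprod_mulSingle]
    simp [hφ]
  have h2 : Φ.comp Ψ = MonoidHom.id _ := by
    refine MonoidHom.pi_ext fun i x => ?_
    induction x using FreeGroup.induction_on with
    | C1 => simp
    | of v =>
      obtain ⟨v, rfl⟩ := v
      show Φ (Ψ (Pi.mulSingle (c v) (FreeGroup.of ⟨v, rfl⟩))) = _
      rw [hΨ, MonoidHom.noncommPiCoprod_mulSingle, hφ]
      rw [FreeGroup.lift_apply_of, hΦ, PresentedGroup.toGroup.of]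
      rfl
    | inv_of v ih =>
      simp only [MonoidHom.comp_apply, MonoidHom.id_apply] at ih ⊢
      rw [Pi.mulSingle_inv, map_inv, map_inv, ih]
    | mul a b iha ihb =>
      have : (Pi.mulSingle i (a * b) : (j : Fin r) → FreeGroup {v : V // c v = j}) =
          Pi.mulSingle i a * Pi.mulSingle i b := by
        simp [Pi.mulSingle_mul]
      simp only [MonoidHom.comp_apply, MonoidHom.id_apply] at iha ihb ⊢
      rw [this, map_mul, map_mul, iha, ihb]
  exact ⟨MonoidHom.toMulEquiv Φ Ψ h1 h2⟩
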